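/- If G is a bipartite graph with parts A and B and maximum degree at most 3, and G has girth at least 16, then the 'square graph' G_A on A (where u, v ∈ A are adjacent iff they have a common neighbor in G) has no cycles of length k for any 4 ≤ k ≤ 7. -/

import Mathlib

/-- The square graph `G_A` on the part `A`: `u` and `v` are adjacent iff they are
distinct members of `A` with a common neighbor in `G`. -/
def squareOn {V : Type*} (G : SimpleGraph V) (A : Set V) : SimpleGraph V where
  Adj u v := u ∈ A ∧ v ∈ A ∧ u ≠ v ∧ ∃ w, G.Adj u w ∧ G.Adj v w
  symm := by
    constructor
    rintro u v ⟨hu, hv, hne, w, h1, h2⟩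
    exact ⟨hv, hu, hne.symm, w, h2, h1⟩
  loopless := by
    constructor
    rintro u ⟨-, -, hne, -⟩
    exact hne rfl

namespace SqAux

open SimpleGraph

variable {V : Type*}

/-- The edge list of the "lifted" closed walk determined by `A`-vertices `us`
(followed by final vertex `t`) and witnesses `ws`. -/
def elist (t : V) : List V → List V → List (Sym2 V)
  | u :: us, w :: ws => s(u, w) :: s(w, us.headD t) :: elist t us ws
  | _, _ => []

/-- Validity of the witness data. -/
def Ok (G : SimpleGraph V) (t : V) : List V → List V → Prop
  | u :: us, w :: ws => G.Adj u w ∧ G.Adj (us.headD t) w ∧ Ok G t us ws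
  | [], [] => True
  | _, _ => False

lemma elist_length (t : V) :
    ∀ us ws : List V, us.length = ws.length →
      (elist t us ws).length = 2 * us.length := by
  intro us
  induction us with
  | nil => intro ws h; cases ws with
    | nil => simp [elist]
    | cons w ws => simp at h
  | cons u us ih =>
    intro ws h
    cases ws with
    | nil => simp at h
    | cons w ws =>
      simp only [List.length_cons, Nat.add_right_cancel_iff] at h
      simp [elist, ih ws h]; ring

/-- A walk realizing `elist`. -/
lemma exists_walk {G : SimpleGraph V} (t : V) :
    ∀ us ws : List V, Ok G t us ws →
      ∃ W : G.Walk (us.headD t) t, W.edges = elist t us ws := by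
  intro us
  induction us with
  | nil => intro ws hok; cases ws with
    | nil => exact ⟨Walk.nil, by simp [elist]⟩
    | cons w ws => exact absurd hok (by simp [Ok])
  | cons u us ih =>
    intro ws hok
    cases ws with
    | nil => exact absurd hok (by simp [Ok])
    | cons w ws =>
      obtain ⟨h1, h2, h3⟩ := hok
      obtain ⟨W, hW⟩ := ih ws h3
      exact ⟨Walk.cons h1 (Walk.cons h2.symm W), by simp [elist, hW]⟩

lemma not_mem_elist (t a : V) :
    ∀ us ws : List V, a ∉ us → a ∉ ws → a ≠ t →
      ∀ b, s(a, b) ∉ elist t us ws := by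
  intro us
  induction us with
  | nil => intro ws _ _ _ b; cases ws <;> simp [elist]
  | cons u us ih =>
    intro ws ha hw hat b
    cases ws with
    | nil => simp [elist]
    | cons w ws =>
      have hau : a ≠ u := by simp at ha; tauto
      have haw : a ≠ w := by simp at hw; tauto
      have hhd : a ≠ us.headD t := by
        cases us with
        | nil => simpa using hat
        | cons u' us' => simp at ha; tauto
      simp only [elist, List.mem_cons, not_or]
      refine ⟨?_, ?_, ih ws (by simp at ha; tauto) (by simp at hw; tauto) hat b⟩
      · rw [Sym2.eq_iff]; tauto
      · rw [Sym2.eq_iff]; tauto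

/-- From a closed walk containing an edge with odd multiplicity, extract a cycle of
at most the same length. -/
lemma exists_cycle_of_odd_count {G : SimpleGraph V} [DecidableEq V] :
    ∀ (n : ℕ) {v : V} (c : G.Walk v v), c.length = n →
      (∃ e, Odd (c.edges.count e)) →
      ∃ (u : V) (w : G.Walk u u), w.IsCycle ∧ w.length ≤ n := by
  intro n
  induction n using Nat.strong_induction_on with
  | _ n ih =>
    intro v c hlen he
    obtain ⟨e, he⟩ := he
    cases c with
    | nil => simp at he
    | cons h p =>
      rename_i x
      by_cases hnd : (Walk.cons h p).support.tail.Nodup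
      · have hp : p.IsPath := by
          rw [Walk.isPath_def]
          simpa using hnd
        by_cases hmem : s(v, x) ∈ p.edges
        · -- then p must be the single edge x-v, and all counts are even
          exfalso
          cases p with
          | nil => simp at hmem
          | cons h' q =>
            rename_i y
            rw [Walk.edges_cons, List.mem_cons] at hmem
            rcases hmem with hmem | hmem
            · rw [Sym2.eq_iff] at hmem
              have hvy : v = y := by
                rcases hmem with ⟨hvx, -⟩ | ⟨hvy, -⟩
                · exact absurd hvx h.ne
                · exact hvy
              subst hvy
              have hq : q = Walk.nil := by
                have := hp.of_cons
                rwa [Walk.isPath_iff_eq_nil] at this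
              subst hq
              simp only [Walk.edges_cons, Walk.edges_nil] at he
              have : s(x, v) = s(v, x) := Sym2.eq_swap
              rw [this] at he
              rcases eq_or_ne e s(v, x) with rfl | hne
              · simp [List.count_cons, Nat.odd_iff] at he
              · simp [List.count_cons, hne, Ne.symm hne, Nat.odd_iff] at he
            · exact (by simpa using hp : q.IsPath ∧ x ∉ q.support).2
                (q.fst_mem_support_of_mem_edges (by rwa [Sym2.eq_swap] at hmem))
        · exact ⟨v, Walk.cons h p, (Walk.cons_isCycle_iff p h).mpr ⟨hp, hmem⟩, le_of_eq hlen⟩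
      · -- split the closed walk into two shorter closed walks
        have hnd' : ¬ p.support.Nodup := by simpa using hnd
        obtain ⟨y, hdup⟩ := List.exists_duplicate_iff_not_nodup.mpr hnd'
        have hcount : 2 ≤ p.support.count y := List.duplicate_iff_two_le_count.mp hdup
        have hy : y ∈ p.support := hdup.mem
        set q := p.takeUntil y hy with hq
        set r := p.dropUntil y hy with hr
        have hspec : q.append r = p := p.take_spec hy
        have hcq : q.support.count y = 1 := p.count_support_takeUntil_eq_one hy
        have hcr : 1 ≤ r.support.tail.count y := by
          have := hspec ▸ hcount
          rw [Walk.support_append, List.count_append, hcq] at this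
          omega
        have hyr : y ∈ r.support.tail := by
          rw [← List.count_pos_iff]; omega
        cases hrc : r with
        | nil => rw [hrc] at hyr; simp at hyr
        | cons hadj r' =>
          rename_i z
          rw [hrc] at hyr
          simp only [Walk.support_cons, List.tail_cons] at hyr
          set r1 := r'.takeUntil y hyr with hr1
          set r2 := r'.dropUntil y hyr with hr2
          have hspec' : r1.append r2 = r' := r'.take_spec hyr
          have hedges : (Walk.cons h p).edges
              = s(v, x) :: (q.edges ++ (s(y, z) :: (r1.edges ++ r2.edges))) := by
            rw [Walk.edges_cons]
            congr 1
            rw [← hspec, Walk.edges_append]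
            congr 1
            rw [hrc, Walk.edges_cons]
            congr 1
            rw [← hspec', Walk.edges_append]
          have hlen' : 1 + q.length + (1 + (r1.length + r2.length)) = n := by
            have h1 : q.length + r.length = p.length := by
              have := congrArg Walk.length hspec
              simpa [Walk.length_append] using this
            have h2 : r.length = r'.length + 1 := by rw [hrc]; simp
            have h3 : r1.length + r2.length = r'.length := by
              have := congrArg Walk.length hspec'
              simpa [Walk.length_append] using this
            have h4 : p.length + 1 = n := by simpa using hlen
            omega
          set C1 : G.Walk y y := Walk.cons hadj r1 with hC1
          set C2 : G.Walk v v := Walk.cons h (q.append r2) with hC2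
          have hsum : (C1.edges.count e) + (C2.edges.count e)
              = ((Walk.cons h p).edges.count e) := by
            rw [hedges, hC1, hC2]
            simp [Walk.edges_cons, Walk.edges_append, List.count_append, List.count_cons]
            omega
          have hl1 : C1.length = 1 + r1.length := by simp [hC1]; omega
          have hl2 : C2.length = 1 + q.length + r2.length := by
            simp [hC2, Walk.length_append]; omega
          have hpar : Odd (C1.edges.count e) ∨ Odd (C2.edges.count e) := by
            rw [← hsum] at he
            rcases Nat.even_or_odd (C1.edges.count e) with h1 | h1
            · right
              rw [Nat.even_iff] at h1
              rw [Nat.odd_iff] at he ⊢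
              omega
            · left; exact h1
          rcases hpar with hod | hod
          · obtain ⟨u, w, hw, hwl⟩ := ih C1.length (by omega) C1 rfl ⟨e, hod⟩
            exact ⟨u, w, hw, by omega⟩
          · obtain ⟨u, w, hw, hwl⟩ := ih C2.length (by omega) C2 rfl ⟨e, hod⟩
            exact ⟨u, w, hw, by omega⟩

lemma headD_ne_of_mem_tail {l : List V} {t x : V} (h : l.Nodup) (hx : x ∈ l.tail) :
    l.headD t ≠ x := by
  cases l with
  | nil => simp at hx
  | cons a l =>
    simp only [List.headD_cons]
    rintro rfl
    exact (List.nodup_cons.mp h).1 hx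

lemma count_one [DecidableEq V] (A : Set V) (t : V) :
    ∀ (us₁ ws₁ : List V) (u u' w w' : V) (us₂ ws₂ : List V),
      us₁.length = ws₁.length →
      (us₁ ++ u :: u' :: us₂).Nodup →
      t ∉ (us₁ ++ u :: u' :: us₂).tail →
      (∀ x ∈ us₁ ++ u :: u' :: us₂, x ∈ A) →
      (∀ y ∈ ws₁ ++ w :: w' :: ws₂, y ∉ A) →
      w ≠ w' →
      List.count s(u', w) (elist t (us₁ ++ u :: u' :: us₂) (ws₁ ++ w :: w' :: ws₂)) = 1 := by
  intro us₁
  induction us₁ with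
  | nil =>
    intro ws₁ u u' w w' us₂ ws₂ hlen hnd ht hA hB hww
    cases ws₁ with
    | cons b ws₁' => simp at hlen
    | nil =>
      simp only [List.nil_append] at *
      have huA : u ∈ A := hA u (by simp)
      have hu'A : u' ∈ A := hA u' (by simp)
      have hwB : w ∉ A := hB w (by simp)
      have hw'B : w' ∉ A := hB w' (by simp)
      have huu' : u ≠ u' := by simp at hnd; tauto
      have hu't : u' ≠ t := by simp at ht; tauto
      have hu'us₂ : u' ∉ us₂ := by simp at hnd; tauto
      have hu'ws₂ : u' ∉ ws₂ := fun hmem => (hB u' (by simp [hmem])) hu'A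
      have hu'hd : u' ≠ us₂.headD t := by
        cases us₂ with
        | nil => simpa using hu't
        | cons z zs => simp at hnd ⊢; tauto
      show List.count s(u', w)
        (s(u, w) :: s(w, u') :: s(u', w') :: s(w', us₂.headD t) :: elist t us₂ ws₂) = 1
      have e1 : s(u, w) ≠ s(u', w) := by
        rw [Ne, Sym2.eq_iff]
        rintro (⟨h1, -⟩ | ⟨h1, h2⟩)
        · exact huu' h1
        · exact hwB (h1 ▸ huA)
      have e2 : s(w, u') = s(u', w) := Sym2.eq_swap
      have e3 : s(u', w') ≠ s(u', w) := by
        rw [Ne, Sym2.eq_iff]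
        rintro (⟨-, rfl⟩ | ⟨rfl, -⟩) <;> tauto
      have e4 : s(w', us₂.headD t) ≠ s(u', w) := by
        rw [Ne, Sym2.eq_iff]
        rintro (⟨rfl, -⟩ | ⟨-, h2⟩)
        · exact hw'B hu'A
        · exact hu'hd h2.symm
      have e5 : List.count s(u', w) (elist t us₂ ws₂) = 0 := by
        rw [List.count_eq_zero]
        exact not_mem_elist t u' us₂ ws₂ hu'us₂ hu'ws₂ hu't w
      rw [List.count_cons_of_ne e1, e2, List.count_cons_self,
        List.count_cons_of_ne e3, List.count_cons_of_ne e4, e5]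
  | cons a us₁' ih =>
    intro ws₁ u u' w w' us₂ ws₂ hlen hnd ht hA hB hww
    cases ws₁ with
    | nil => simp at hlen
    | cons b ws₁' =>
      simp only [List.cons_append] at *
      have hu'A : u' ∈ A := hA u' (by simp)
      have hbB : b ∉ A := hB b (by simp)
      have hwB : w ∉ A := hB w (by simp)
      have haA : a ∈ A := hA a (by simp)
      have hau' : a ≠ u' := by
        have := (List.nodup_cons.mp hnd).1
        intro hEq; exact this (by simp [hEq])
      have hu'tail : u' ∈ (us₁' ++ u :: u' :: us₂).tail := by
        cases us₁' with
        | nil => simp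
        | cons z zs => simp
      have hhd : (us₁' ++ u :: u' :: us₂).headD t ≠ u' :=
        headD_ne_of_mem_tail (List.nodup_cons.mp hnd).2 hu'tail
      show List.count s(u', w)
        (s(a, b) :: s(b, (us₁' ++ u :: u' :: us₂).headD t) ::
          elist t (us₁' ++ u :: u' :: us₂) (ws₁' ++ w :: w' :: ws₂)) = 1
      have e1 : s(a, b) ≠ s(u', w) := by
        rw [Ne, Sym2.eq_iff]
        rintro (⟨rfl, -⟩ | ⟨rfl, -⟩) <;> tauto
      have e2 : s(b, (us₁' ++ u :: u' :: us₂).headD t) ≠ s(u', w) := by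
        rw [Ne, Sym2.eq_iff]
        rintro (⟨rfl, -⟩ | ⟨-, h2⟩)
        · exact hbB hu'A
        · exact hhd h2
      have e5 := ih ws₁' u u' w w' us₂ ws₂ (by simpa using hlen)
        (List.nodup_cons.mp hnd).2
        (fun hmem => (by simpa using ht : t ∉ us₁' ++ u :: u' :: us₂) (List.mem_of_mem_tail hmem))
        (fun x hx => hA x (by simp [hx]))
        (fun y hy => hB y (by simp [hy])) hww
      rw [List.count_cons_of_ne e1, List.count_cons_of_ne e2, e5]

lemma headD_dropLast_support {H : SimpleGraph V} {x v t : V} (q : H.Walk x v) :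
    (q.support.dropLast).headD t = if q.Nil then t else x := by
  cases q with
  | nil => simp
  | cons h r =>
    rw [Walk.support_cons, List.dropLast_cons_of_ne_nil (Walk.support_ne_nil r)]
    simp

lemma end_not_mem_dropLast {H : SimpleGraph V} {v : V} :
    ∀ {a : V} (p : H.Walk a v), p.support.Nodup → v ∉ p.support.dropLast := by
  intro a p
  induction p with
  | nil => simp
  | cons h q ih =>
    intro hnd
    rw [Walk.support_cons] at hnd
    rw [Walk.support_cons, List.dropLast_cons_of_ne_nil (Walk.support_ne_nil q)]
    simp only [List.mem_cons, not_or]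
    constructor
    · rintro rfl
      exact (List.nodup_cons.mp hnd).1 (Walk.end_mem_support q)
    · exact ih (List.nodup_cons.mp hnd).2

lemma exists_wits {G : SimpleGraph V} {A : Set V}
    (hbip : ∀ u v : V, G.Adj u v → (u ∈ A ↔ v ∉ A)) (v : V) :
    ∀ {a : V} (p : (squareOn G A).Walk a v),
      ∃ ws : List V, Ok G v (p.support.dropLast) ws ∧ ws.length = p.length ∧
        (∀ y ∈ ws, y ∉ A) ∧ (∀ u ∈ p.support.dropLast, u ∈ A) := by
  intro a p
  induction p with
  | nil => exact ⟨[], by simp [Ok], by simp, by simp, by simp⟩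
  | cons h q ih =>
    obtain ⟨haA, hxA, hne, w, hw1, hw2⟩ := id h
    obtain ⟨ws, hok, hlen, hwA, huA⟩ := ih
    have hwB : w ∉ A := (hbip _ _ hw1).mp haA
    refine ⟨w :: ws, ?_, by simp [hlen], ?_, ?_⟩
    · rw [Walk.support_cons, List.dropLast_cons_of_ne_nil (Walk.support_ne_nil q)]
      refine ⟨hw1, ?_, hok⟩
      rw [headD_dropLast_support q]
      split_ifs with hnil
      · exact hnil.eq ▸ hw2
      · exact hw2
    · intro y hy
      rcases List.mem_cons.mp hy with rfl | hy
      · exact hwB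
      · exact hwA y hy
    · rw [Walk.support_cons, List.dropLast_cons_of_ne_nil (Walk.support_ne_nil q)]
      intro u hu
      rcases List.mem_cons.mp hu with rfl | hu
      · exact haA
      · exact huA u hu

lemma ok_adj {G : SimpleGraph V} (t w : V) :
    ∀ (us ws : List V), Ok G t us ws → (∀ y ∈ ws, y = w) → ∀ u ∈ us, G.Adj u w := by
  intro us
  induction us with
  | nil => intro ws _ _ u hu; simp at hu
  | cons u' us ih =>
    intro ws hok hc u hu
    cases ws with
    | nil => exact absurd hok (by simp [Ok])
    | cons w₀ ws =>
      obtain ⟨h1, h2, h3⟩ := hok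
      have hw₀ : w₀ = w := hc w₀ (by simp)
      rcases List.mem_cons.mp hu with rfl | hu
      · exact hw₀ ▸ h1
      · exact ih ws h3 (fun y hy => hc y (by simp [hy])) u hu

lemma list_const_or_split (d : V) :
    ∀ l : List V, (∀ x ∈ l, x = l.headD d) ∨
      ∃ l₁ a b l₂, l = l₁ ++ a :: b :: l₂ ∧ a ≠ b := by
  intro l
  induction l with
  | nil => left; simp
  | cons a l ih =>
    cases l with
    | nil => left; simp
    | cons b l' =>
      rcases eq_or_ne a b with rfl | hab
      · rcases ih with hconst | ⟨l₁, c, c', l₂, heq, hne⟩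
        · left
          intro x hx
          rcases List.mem_cons.mp hx with rfl | hx
          · simp
          · simpa using hconst x hx
        · right
          exact ⟨a :: l₁, c, c', l₂, by simp [heq], hne⟩
      · right
        exact ⟨[], a, b, l', rfl, hab⟩

end SqAux

/-- If `G` is bipartite with part `A`, subcubic, and has girth at least 16, then the
square graph `G_A` has no cycle of length `k` for any `4 ≤ k ≤ 7`. -/
theorem squareOn_no_short_cycles {V : Type*} [Fintype V] (G : SimpleGraph V)
    [DecidableRel G.Adj] (A : Set V)
    (hbip : ∀ u v : V, G.Adj u v → (u ∈ A ↔ v ∉ A))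
    (hdeg : ∀ v : V, G.degree v ≤ 3)
    (hgirth : 16 ≤ G.girth) :
    ∀ k : ℕ, 4 ≤ k → k ≤ 7 →
      ∀ (v : V) (w : (squareOn G A).Walk v v), ¬(w.IsCycle ∧ w.length = k) := by
  classical
  intro k hk4 hk7 v c hc
  obtain ⟨hcyc, hlen⟩ := hc
  -- every cycle in G has length at least 16
  have hbig : ∀ (u : V) (w : G.Walk u u), w.IsCycle → 16 ≤ w.length := by
    intro u w hw
    have h1 : G.egirth ≤ w.length := SimpleGraph.le_egirth.mp le_rfl u w hw
    have h2 : G.girth ≤ w.length := by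
      have := ENat.toNat_le_toNat h1 (by simp)
      simpa [SimpleGraph.girth] using this
    omega
  cases c with
  | nil => simp at hlen; omega
  | cons h c' =>
    rename_i x
    have hk : (SimpleGraph.Walk.cons h c').length = k := hlen
    have htail : (SimpleGraph.Walk.cons h c').support.tail.Nodup := hcyc.support_nodup
    have hc'nd : c'.support.Nodup := by simpa using htail
    obtain ⟨ws, hok, hwslen, hwB, huA⟩ :=
      SqAux.exists_wits hbip v (SimpleGraph.Walk.cons h c')
    have husv : (SimpleGraph.Walk.cons h c').support.dropLast
        = v :: c'.support.dropLast := by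
      rw [SimpleGraph.Walk.support_cons,
        List.dropLast_cons_of_ne_nil (SimpleGraph.Walk.support_ne_nil c')]
    rw [husv] at hok huA
    set us : List V := v :: c'.support.dropLast with hus
    have hnd : us.Nodup := by
      rw [hus, List.nodup_cons]
      exact ⟨SqAux.end_not_mem_dropLast c' hc'nd,
        hc'nd.sublist (List.dropLast_sublist _)⟩
    have htv : v ∉ us.tail := by
      rw [hus]
      simpa using SqAux.end_not_mem_dropLast c' hc'nd
    have hck : c'.length + 1 = k := by simpa using hk
    have huslen : us.length = k := by
      rw [hus]
      simp only [List.length_cons, List.length_dropLast,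
        SimpleGraph.Walk.length_support]
      omega
    have hwsk : ws.length = k := by rw [hwslen, hk]
    rcases SqAux.list_const_or_split v ws with hconst | ⟨ws₁, w, w', ws₂, hsplit, hww⟩
    · -- all witnesses are equal: the common witness has degree ≥ 4
      set w := ws.headD v with hw
      have hadj : ∀ u ∈ us, G.Adj u w := SqAux.ok_adj v w us ws hok hconst
      have hsub : us.toFinset ⊆ G.neighborFinset w := by
        intro u hu
        rw [List.mem_toFinset] at hu
        rw [SimpleGraph.mem_neighborFinset]
        exact (hadj u hu).symm
      have hcard : us.toFinset.card = k := by
        rw [List.card_toFinset, hnd.dedup, huslen]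
      have hle := Finset.card_le_card hsub
      rw [hcard, SimpleGraph.card_neighborFinset_eq_degree] at hle
      have := hdeg w
      omega
    · -- two consecutive witnesses differ: get an odd edge, hence a short cycle in G
      set n := ws₁.length with hn
      have hn2 : n + 2 ≤ k := by
        have := congrArg List.length hsplit
        simp only [List.length_append, List.length_cons, hwsk] at this
        omega
      have hn1 : n + 1 < us.length := by omega
      set u : V := us[n]'(by omega) with hu
      set u' : V := us[n + 1]'(by omega) with hu'
      have husdec : us = us.take n ++ u :: u' :: us.drop (n + 2) := by
        conv_lhs => rw [← List.take_append_drop n us]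
        congr 1
        rw [List.drop_eq_getElem_cons (by omega), List.drop_eq_getElem_cons (by omega)]
      have hcount := SqAux.count_one A v (us.take n) ws₁ u u' w w'
        (us.drop (n + 2)) ws₂
        (by rw [List.length_take]; omega)
        (husdec ▸ hnd) (husdec ▸ htv)
        (by intro z hz; exact huA z (husdec ▸ hz))
        (by intro z hz; exact hwB z (hsplit ▸ hz)) hww
      obtain ⟨W, hWe⟩ := SqAux.exists_walk v us ws hok
      have hodd : Odd (W.edges.count s(u', w)) := by
        rw [hWe]
        rw [husdec, hsplit]
        rw [hcount]
        exact odd_one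
      obtain ⟨z, Z, hZ, hZl⟩ := SqAux.exists_cycle_of_odd_count W.length W rfl ⟨_, hodd⟩
      have h16 := hbig z Z hZ
      have hWlen : W.length = 2 * k := by
        have := congrArg List.length hWe
        rw [SimpleGraph.Walk.length_edges,
          SqAux.elist_length v us ws (by omega)] at this
        omega
      omega
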